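/- Let x_1, ..., x_N be distinct variables and q ≠ 0. Then for every k ≥ 0, (k+1)! · m_k^{(q)}(x_1,...,x_N) = (1/q) Σ_{π ∈ P(k+1)} (-1)^{|π|-1} ∏_{V ∈ π} (|V|-1)! · (p_{|V|}(x_1+q,...,x_N+q) - p_{|V|}(x_1,...,x_N)), where P(k+1) is the set of set partitions of {1,...,k+1}, p_m denotes the m-th power sum, and m_k^{(q)}(x) = Σ_i (∏_{j≠i}(x_i - x_j - q)/(x_i - x_j)) x_i^k. -/

import Mathlib

open Finset

open scoped Classical in
noncomputable def qPPpartitions {α : Type*} (S : Finset α) : Finset (Finset (Finset α)) :=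
  S.powerset.powerset.filter (fun P => (∅ ∉ P) ∧ ∀ a ∈ S, ∃! V, V ∈ P ∧ a ∈ V)

open scoped Classical in
noncomputable def qPPpartSum {α : Type*} (f : ℕ → ℝ) (S : Finset α) : ℝ :=
  ∑ P ∈ qPPpartitions S, ∏ V ∈ P, f V.card

theorem qPP_mem_partitions {α : Type*} {S : Finset α} {P : Finset (Finset α)} :
    P ∈ qPPpartitions S ↔
      (∀ V ∈ P, V ⊆ S) ∧ (∅ ∉ P) ∧ ∀ a ∈ S, ∃! V, V ∈ P ∧ a ∈ V := by
  classical
  simp only [qPPpartitions, mem_filter, mem_powerset, and_assoc]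
  constructor
  · rintro ⟨h1, h2, h3⟩
    exact ⟨fun V hV => by simpa using h1 (by simpa using hV), h2, h3⟩
  · rintro ⟨h1, h2, h3⟩
    exact ⟨fun V hV => by simp only [mem_powerset]; exact h1 V (by simpa using hV), h2, h3⟩

theorem qPPpartitions_empty {α : Type*} : qPPpartitions (∅ : Finset α) = {∅} := by
  ext P
  rw [qPP_mem_partitions]
  simp only [mem_singleton]
  constructor
  · rintro ⟨hP, hne, -⟩
    ext V
    simp only [Finset.notMem_empty, iff_false]
    intro hV
    have := hP V hV
    rw [Finset.subset_empty] at this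
    exact hne (this ▸ hV)
  · rintro rfl
    exact ⟨by simp, by simp, by simp⟩

theorem qPPpartSum_empty {α : Type*} (f : ℕ → ℝ) : qPPpartSum f (∅ : Finset α) = 1 := by
  simp [qPPpartSum, qPPpartitions_empty]

open scoped Classical in
theorem qPP_insert_mem_partitions {α : Type*} {S V : Finset α} {a : α} (hV : V ⊆ S) (haV : a ∈ V)
    {P' : Finset (Finset α)} (hP' : P' ∈ qPPpartitions (S \ V)) :
    insert V P' ∈ qPPpartitions S := by
  rw [qPP_mem_partitions] at hP' ⊢
  obtain ⟨hsub, hne, hcov⟩ := hP'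
  have hblock : ∀ W ∈ P', W ⊆ S \ V := hsub
  refine ⟨?_, ?_, ?_⟩
  · intro W hW
    rcases Finset.mem_insert.mp hW with rfl | hW
    · exact hV
    · exact (hblock W hW).trans (Finset.sdiff_subset)
  · intro h
    rcases Finset.mem_insert.mp h with h | h
    · exact Finset.notMem_empty a (h ▸ haV)
    · exact hne h
  · intro b hb
    by_cases hbV : b ∈ V
    · refine ⟨V, ⟨Finset.mem_insert_self _ _, hbV⟩, ?_⟩
      rintro W ⟨hW, hbW⟩
      rcases Finset.mem_insert.mp hW with rfl | hW
      · rfl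
      · exact absurd ((hblock W hW) hbW) (by simp [hbV])
    · obtain ⟨W0, ⟨hW0, hbW0⟩, huniq⟩ := hcov b (Finset.mem_sdiff.mpr ⟨hb, hbV⟩)
      refine ⟨W0, ⟨Finset.mem_insert_of_mem hW0, hbW0⟩, ?_⟩
      rintro W ⟨hW, hbW⟩
      rcases Finset.mem_insert.mp hW with rfl | hW
      · exact absurd hbW hbV
      · exact huniq W ⟨hW, hbW⟩

open scoped Classical in
theorem qPP_erase_mem_partitions {α : Type*} {S : Finset α} {P : Finset (Finset α)}
    (hP : P ∈ qPPpartitions S) {V : Finset α} (hVP : V ∈ P) :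
    P.erase V ∈ qPPpartitions (S \ V) := by
  rw [qPP_mem_partitions] at hP ⊢
  obtain ⟨hsub, hne, hcov⟩ := hP
  refine ⟨?_, fun h => hne (Finset.mem_of_mem_erase h), ?_⟩
  · intro W hW b hbW
    have hWP := Finset.mem_of_mem_erase hW
    have hbS : b ∈ S := hsub W hWP hbW
    refine Finset.mem_sdiff.mpr ⟨hbS, fun hbV => ?_⟩
    obtain ⟨W0, -, huniq⟩ := hcov b hbS
    have h1 : W = W0 := huniq W ⟨hWP, hbW⟩
    have h2 : V = W0 := huniq V ⟨hVP, hbV⟩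
    exact (Finset.ne_of_mem_erase hW) (h1.trans h2.symm)
  · intro b hb
    obtain ⟨hbS, hbV⟩ := Finset.mem_sdiff.mp hb
    obtain ⟨W0, ⟨hW0, hbW0⟩, huniq⟩ := hcov b hbS
    have hW0V : W0 ≠ V := fun h => hbV (h ▸ hbW0)
    exact ⟨W0, ⟨Finset.mem_erase.mpr ⟨hW0V, hW0⟩, hbW0⟩,
      fun W ⟨hW, hbW⟩ => huniq W ⟨Finset.mem_of_mem_erase hW, hbW⟩⟩

open scoped Classical in
theorem qPPpartSum_rec {α : Type*} (f : ℕ → ℝ) {S : Finset α} {a : α} (ha : a ∈ S) :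
    qPPpartSum f S =
      ∑ V ∈ S.powerset.filter (fun V => a ∈ V), f V.card * qPPpartSum f (S \ V) := by
  classical
  have hrw : ∀ V ∈ S.powerset.filter (fun V => a ∈ V),
      f V.card * qPPpartSum f (S \ V) =
        ∑ P' ∈ qPPpartitions (S \ V), f V.card * ∏ W ∈ P', f W.card := by
    intro V _
    rw [qPPpartSum, Finset.mul_sum]
  rw [Finset.sum_congr rfl hrw, Finset.sum_sigma', qPPpartSum]
  refine Finset.sum_bij' (i := fun P hP =>
      (⟨(P.choose (fun V => a ∈ V) ((qPP_mem_partitions.mp hP).2.2 a ha)),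
        P.erase (P.choose (fun V => a ∈ V) ((qPP_mem_partitions.mp hP).2.2 a ha))⟩ :
        (_ : Finset α) × Finset (Finset α)))
    (j := fun p hp => insert p.1 p.2) ?_ ?_ ?_ ?_ ?_
  · -- backward map lands in sigma set
    intro P hP
    have h := (qPP_mem_partitions.mp hP).2.2 a ha
    have hmem := Finset.choose_mem (fun V => a ∈ V) P h
    have hsub := (qPP_mem_partitions.mp hP).1 _ hmem
    simp only [Finset.mem_sigma, Finset.mem_filter, Finset.mem_powerset]
    exact ⟨⟨hsub, Finset.choose_property (fun V => a ∈ V) P h⟩,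
      qPP_erase_mem_partitions hP hmem⟩
  · -- forward map lands in partitions
    intro p hp
    simp only [Finset.mem_sigma, Finset.mem_filter, Finset.mem_powerset] at hp
    exact qPP_insert_mem_partitions hp.1.1 hp.1.2 hp.2
  · -- j ∘ i = id on partitions
    intro P hP
    have h := (qPP_mem_partitions.mp hP).2.2 a ha
    exact Finset.insert_erase (Finset.choose_mem (fun V => a ∈ V) P h)
  · -- i ∘ j = id on sigma
    intro p hp
    obtain ⟨V, P'⟩ := p
    simp only [Finset.mem_sigma, Finset.mem_filter, Finset.mem_powerset] at hp
    obtain ⟨⟨hVS, haV⟩, hP'⟩ := hp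
    have hVnot : V ∉ P' := by
      intro hmem
      have := (qPP_mem_partitions.mp hP').1 _ hmem haV
      simp at this
      exact this.2 haV
    have h1 : ∀ (hh : ∃! W, W ∈ insert V P' ∧ a ∈ W),
        Finset.choose (fun W => a ∈ W) (insert V P') hh = V := fun hh =>
      hh.unique ⟨Finset.choose_mem _ _ hh, Finset.choose_property (fun W => a ∈ W) _ hh⟩
        ⟨Finset.mem_insert_self _ _, haV⟩
    refine Sigma.ext (h1 _) (heq_of_eq ?_)
    show (insert V P').erase (Finset.choose (fun W => a ∈ W) (insert V P') _) = P'
    rw [h1 _]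
    exact Finset.erase_insert hVnot
  · -- values agree
    intro P hP
    have h := (qPP_mem_partitions.mp hP).2.2 a ha
    have hmem := Finset.choose_mem (fun V => a ∈ V) P h
    exact (Finset.mul_prod_erase P _ hmem).symm

noncomputable def qPPFc (f : ℕ → ℝ) : ℕ → ℝ
  | 0 => 1
  | n + 1 => ∑ j ∈ Finset.range (n + 1), (n.choose j : ℝ) * f (j + 1) * qPPFc f (n - j)
  decreasing_by exact Nat.lt_succ_of_le (Nat.sub_le n j)

theorem qPPpartSum_eq_Fc {α : Type*} (f : ℕ → ℝ) :
    ∀ n, ∀ S : Finset α, S.card = n → qPPpartSum f S = qPPFc f n := by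
  classical
  intro n
  induction n using Nat.strong_induction_on with
  | _ n ih =>
    intro S hS
    rcases S.eq_empty_or_nonempty with rfl | ⟨a, ha⟩
    · rw [Finset.card_empty] at hS
      rw [qPPpartSum_empty, ← hS, qPPFc]
    · rw [qPPpartSum_rec f ha]
      have hstep : ∀ V ∈ S.powerset.filter (fun V => a ∈ V),
          f V.card * qPPpartSum f (S \ V) = f V.card * qPPFc f (n - V.card) := by
        intro V hV
        simp only [Finset.mem_filter, Finset.mem_powerset] at hV
        obtain ⟨hVS, haV⟩ := hV
        have hcard : (S \ V).card = S.card - V.card := Finset.card_sdiff_of_subset hVS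
        have hVpos : 0 < V.card := Finset.card_pos.mpr ⟨a, haV⟩
        have hlt : S.card - V.card < n := by
          rw [← hS] at *
          have := Finset.card_le_card hVS
          omega
        rw [ih _ (hS ▸ hlt) _ (by rw [hcard, hS])]
      rw [Finset.sum_congr rfl hstep]
      -- reindex via W = V.erase a
      have hre : ∑ V ∈ S.powerset.filter (fun V => a ∈ V), f V.card * qPPFc f (n - V.card)
          = ∑ W ∈ (S.erase a).powerset, f (W.card + 1) * qPPFc f (n - (W.card + 1)) := by
        refine Finset.sum_bij' (i := fun V _ => V.erase a) (j := fun W _ => insert a W)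
          ?_ ?_ ?_ ?_ ?_
        · intro V hV
          simp only [Finset.mem_filter, Finset.mem_powerset] at hV
          exact Finset.mem_powerset.mpr (Finset.erase_subset_erase a hV.1)
        · intro W hW
          simp only [Finset.mem_powerset] at hW
          simp only [Finset.mem_filter, Finset.mem_powerset]
          exact ⟨Finset.insert_subset ha (hW.trans (Finset.erase_subset a S)),
            Finset.mem_insert_self a W⟩
        · intro V hV
          simp only [Finset.mem_filter, Finset.mem_powerset] at hV
          exact Finset.insert_erase hV.2
        · intro W hW
          simp only [Finset.mem_powerset] at hW
          exact Finset.erase_insert (fun h => (Finset.notMem_erase a S) (hW h))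
        · intro V hV
          simp only [Finset.mem_filter, Finset.mem_powerset] at hV
          rw [Finset.card_erase_add_one hV.2]
      rw [hre, Finset.sum_powerset]
      have hm : (S.erase a).card = n - 1 := by rw [Finset.card_erase_of_mem ha, hS]
      obtain ⟨m, hnm⟩ : ∃ m, n = m + 1 :=
        ⟨n - 1, by
          rw [← hS]
          exact (Nat.succ_pred_eq_of_pos (Finset.card_pos.mpr ⟨a, ha⟩)).symm⟩
      have hcardsum : ∀ j ∈ Finset.range ((S.erase a).card + 1),
          ∑ W ∈ Finset.powersetCard j (S.erase a), f (W.card + 1) * qPPFc f (n - (W.card + 1))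
          = (m.choose j : ℝ) * f (j + 1) * qPPFc f (m - j) := by
        intro j _
        have : ∀ W ∈ Finset.powersetCard j (S.erase a),
            f (W.card + 1) * qPPFc f (n - (W.card + 1)) = f (j + 1) * qPPFc f (m - j) := by
          intro W hW
          have hc := (Finset.mem_powersetCard.mp hW).2
          rw [hc, hnm]
          have hms : m + 1 - (j + 1) = m - j := by omega
          rw [hms]
        rw [Finset.sum_congr rfl this, Finset.sum_const, Finset.card_powersetCard, hm, hnm]
        simp only [Nat.add_sub_cancel, nsmul_eq_mul]
        ring
      rw [Finset.sum_congr rfl hcardsum, hm, hnm]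
      simp only [Nat.add_sub_cancel]
      rw [qPPFc]

noncomputable def qPPgeo (a : ℝ) : PowerSeries ℝ := PowerSeries.mk fun n => a ^ n

theorem qPPgeo_inv (a : ℝ) : (1 - PowerSeries.C (R := ℝ) a * PowerSeries.X) * qPPgeo a = 1 := by
  ext n
  rw [sub_mul, one_mul, map_sub]
  cases n with
  | zero => simp [qPPgeo]
  | succ n =>
    rw [mul_assoc, PowerSeries.coeff_C_mul, PowerSeries.coeff_succ_X_mul]
    simp [qPPgeo, PowerSeries.coeff_mk, pow_succ, mul_comm]

/-- Lagrange interpolation identity in `ℝ[X]` -/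
theorem qPP_lagrange (N : ℕ) (x : Fin N → ℝ) (hx : Function.Injective x) (q : ℝ) :
    ∏ i, (Polynomial.X - Polynomial.C (x i + q)) =
      ∏ i, (Polynomial.X - Polynomial.C (x i))
      + ∑ i, Polynomial.C (-q * ∏ j ∈ Finset.univ.erase i, ((x i - x j - q) / (x i - x j)))
          * ∏ j ∈ Finset.univ.erase i, (Polynomial.X - Polynomial.C (x j)) := by
  rcases Nat.eq_zero_or_pos N with rfl | hN
  · simp
  have hxne : ∀ (i j : Fin N), j ≠ i → x i - x j ≠ 0 := by
    intro i j hji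
    exact sub_ne_zero_of_ne fun h => hji (hx h.symm)
  have hmonic1 : (∏ i, (Polynomial.X - Polynomial.C (x i + q))).Monic :=
    Polynomial.monic_prod_of_monic _ _ fun i _ => Polynomial.monic_X_sub_C _
  have hmonic2 : (∏ i, (Polynomial.X - Polynomial.C (x i))).Monic :=
    Polynomial.monic_prod_of_monic _ _ fun i _ => Polynomial.monic_X_sub_C _
  have hdeg : ∀ y : Fin N → ℝ,
      (∏ i, (Polynomial.X - Polynomial.C (y i))).degree = (N : WithBot ℕ) := by
    intro y
    rw [Polynomial.degree_prod]
    simp only [Polynomial.degree_X_sub_C, Finset.sum_const, Finset.card_univ,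
      Fintype.card_fin, nsmul_eq_mul, mul_one]
  have hdeg1 := hdeg (fun i => x i + q)
  have hdeg2 := hdeg x
  apply Polynomial.eq_of_degree_sub_lt_of_eval_index_eq (univ : Finset (Fin N))
    (Function.Injective.injOn hx)
  · -- degree bound
    rw [Finset.card_univ, Fintype.card_fin]
    have h1 : (∏ i, (Polynomial.X - Polynomial.C (x i + q))
        - ∏ i, (Polynomial.X - Polynomial.C (x i))).degree < (N : WithBot ℕ) := by
      rcases eq_or_ne (∏ i, (Polynomial.X - Polynomial.C (x i + q)))
          (∏ i, (Polynomial.X - Polynomial.C (x i))) with heq | hne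
      · rw [heq, sub_self, Polynomial.degree_zero]
        exact WithBot.bot_lt_coe N
      · calc _ < (∏ i, (Polynomial.X - Polynomial.C (x i + q))).degree :=
              Polynomial.degree_sub_lt (hdeg1.trans hdeg2.symm) hmonic1.ne_zero
                (by rw [hmonic1.leadingCoeff, hmonic2.leadingCoeff])
          _ = (N : WithBot ℕ) := hdeg1
    have h2 : (∑ i, Polynomial.C (-q * ∏ j ∈ Finset.univ.erase i,
        ((x i - x j - q) / (x i - x j)))
          * ∏ j ∈ Finset.univ.erase i, (Polynomial.X - Polynomial.C (x j))).degree
          < (N : WithBot ℕ) := by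
      refine lt_of_le_of_lt (Polynomial.degree_sum_le _ _) ?_
      refine (Finset.sup_lt_iff (WithBot.bot_lt_coe (N : ℕ))).mpr ?_
      intro i _
      refine lt_of_le_of_lt (Polynomial.degree_mul_le _ _) ?_
      have hC : (Polynomial.C (-q * ∏ j ∈ Finset.univ.erase i,
          ((x i - x j - q) / (x i - x j)))).degree ≤ 0 := Polynomial.degree_C_le
      have hP : (∏ j ∈ Finset.univ.erase i, (Polynomial.X - Polynomial.C (x j))).degree
          = ((N - 1 : ℕ) : WithBot ℕ) := by
        rw [Polynomial.degree_prod]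
        simp only [Polynomial.degree_X_sub_C, Finset.sum_const, nsmul_eq_mul, mul_one]
        rw [Finset.card_erase_of_mem (Finset.mem_univ i), Finset.card_univ, Fintype.card_fin]
      calc _ ≤ 0 + ((N-1:ℕ) : WithBot ℕ) := add_le_add hC (le_of_eq hP)
        _ = ((N-1:ℕ) : WithBot ℕ) := zero_add _
        _ < (N : WithBot ℕ) := by
            rw [Nat.cast_lt]
            omega
    have hsplit : ∏ i, (Polynomial.X - Polynomial.C (x i + q))
        - (∏ i, (Polynomial.X - Polynomial.C (x i))
          + ∑ i, Polynomial.C (-q * ∏ j ∈ Finset.univ.erase i,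
              ((x i - x j - q) / (x i - x j)))
            * ∏ j ∈ Finset.univ.erase i, (Polynomial.X - Polynomial.C (x j)))
        = (∏ i, (Polynomial.X - Polynomial.C (x i + q))
            - ∏ i, (Polynomial.X - Polynomial.C (x i)))
          - ∑ i, Polynomial.C (-q * ∏ j ∈ Finset.univ.erase i,
              ((x i - x j - q) / (x i - x j)))
            * ∏ j ∈ Finset.univ.erase i, (Polynomial.X - Polynomial.C (x j)) := by
      ring
    rw [hsplit]
    exact lt_of_le_of_lt (Polynomial.degree_sub_le _ _) (max_lt h1 h2)
  · -- evaluation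
    intro i _
    simp only [Polynomial.eval_add, Polynomial.eval_prod, Polynomial.eval_sub,
      Polynomial.eval_X, Polynomial.eval_C, Polynomial.eval_finset_sum, Polynomial.eval_mul]
    have hz : ∏ j, (x i - x j) = 0 :=
      Finset.prod_eq_zero (Finset.mem_univ i) (by simp)
    rw [hz]
    rw [Finset.sum_eq_single i]
    · have hfac : (∏ j ∈ Finset.univ.erase i, ((x i - x j - q) / (x i - x j)))
          * ∏ j ∈ Finset.univ.erase i, (x i - x j)
          = ∏ j ∈ Finset.univ.erase i, (x i - x j - q) := by
        rw [← Finset.prod_mul_distrib]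
        refine Finset.prod_congr rfl fun j hj => ?_
        exact div_mul_cancel₀ _ (hxne i j (Finset.mem_erase.mp hj).1)
      have hsplit : ∏ j, (x i - (x j + q)) = (x i - (x i + q)) *
          ∏ j ∈ Finset.univ.erase i, (x i - (x j + q)) :=
        (Finset.mul_prod_erase _ _ (Finset.mem_univ i)).symm
      have hkey : (x i - (x i + q)) * ∏ j ∈ Finset.univ.erase i, (x i - (x j + q))
          = -q * ∏ j ∈ Finset.univ.erase i, (x i - x j - q) := by
        simp only [sub_add_eq_sub_sub]
        ring
      rw [hsplit, zero_add, hkey, ← hfac]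
      ring
    · intro b _ hbi
      have : ∏ j ∈ Finset.univ.erase b, (x i - x j) = 0 :=
        Finset.prod_eq_zero (Finset.mem_erase.mpr ⟨fun h => hbi h.symm, Finset.mem_univ i⟩)
          (by simp)
      rw [this, mul_zero]
    · intro h
      exact absurd (Finset.mem_univ i) h

theorem qPP_reflect_linear (a : ℝ) :
    Polynomial.reflect 1 (Polynomial.X - Polynomial.C a)
      = 1 - Polynomial.C a * Polynomial.X := by
  have h : (Polynomial.X - Polynomial.C a : Polynomial ℝ)
      = Polynomial.C 1 * Polynomial.X ^ 1 + Polynomial.C (-a) * Polynomial.X ^ 0 := by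
    simp only [map_one, one_mul, pow_one, map_neg, pow_zero, mul_one]
    ring
  rw [h, Polynomial.reflect_add, Polynomial.reflect_C_mul_X_pow,
    Polynomial.reflect_C_mul_X_pow]
  simp only [Polynomial.revAt_le (le_refl 1), Polynomial.revAt_le (Nat.zero_le 1),
    Nat.sub_self, Nat.sub_zero, pow_zero, mul_one, map_one, one_mul, pow_one, map_neg]
  ring

theorem qPP_reflect_sum {ι : Type*} (s : Finset ι) (N : ℕ) (p : ι → Polynomial ℝ) :
    Polynomial.reflect N (∑ i ∈ s, p i) = ∑ i ∈ s, Polynomial.reflect N (p i) := by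
  classical
  induction s using Finset.induction_on with
  | empty => simp [Polynomial.reflect_zero]
  | @insert _ _ hb ih => rw [Finset.sum_insert hb, Finset.sum_insert hb, Polynomial.reflect_add, ih]

theorem qPP_reflect_prod {ι : Type*} (s : Finset ι) (a : ι → ℝ) :
    Polynomial.reflect s.card (∏ i ∈ s, (Polynomial.X - Polynomial.C (a i)))
      = ∏ i ∈ s, (1 - Polynomial.C (a i) * Polynomial.X) := by
  classical
  induction s using Finset.induction_on with
  | empty => simp [Polynomial.reflect_one]
  | @insert b s hb ih =>
    rw [Finset.prod_insert hb, Finset.prod_insert hb, Finset.card_insert_of_notMem hb,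
      Nat.add_comm]
    have hd : (∏ i ∈ s, (Polynomial.X - Polynomial.C (a i))).natDegree ≤ s.card := by
      refine le_trans (Polynomial.natDegree_prod_le _ _) ?_
      simp [Polynomial.natDegree_X_sub_C]
    rw [Polynomial.reflect_mul _ _ (le_of_eq (Polynomial.natDegree_X_sub_C _)) hd,
      qPP_reflect_linear, ih]

theorem qPP_reflect_shift {ι : Type*} (s : Finset ι) (a : ι → ℝ) :
    Polynomial.reflect (s.card + 1) (∏ i ∈ s, (Polynomial.X - Polynomial.C (a i)))
      = Polynomial.X * ∏ i ∈ s, (1 - Polynomial.C (a i) * Polynomial.X) := by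
  have h1 : (∏ i ∈ s, (Polynomial.X - Polynomial.C (a i)))
      = 1 * ∏ i ∈ s, (Polynomial.X - Polynomial.C (a i)) := (one_mul _).symm
  have hd : (∏ i ∈ s, (Polynomial.X - Polynomial.C (a i))).natDegree ≤ s.card := by
    refine le_trans (Polynomial.natDegree_prod_le _ _) ?_
    simp [Polynomial.natDegree_X_sub_C]
  rw [h1, Nat.add_comm,
    Polynomial.reflect_mul _ _ (by rw [Polynomial.natDegree_one]; exact Nat.zero_le 1) hd,
    Polynomial.reflect_one, pow_one, qPP_reflect_prod]

/-- the reflected (generating-function) form of the Lagrange identity -/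
theorem qPP_poly_id (N : ℕ) (x : Fin N → ℝ) (hx : Function.Injective x) (q : ℝ) :
    ∏ i, (1 - Polynomial.C (x i + q) * Polynomial.X) =
      ∏ i, (1 - Polynomial.C (x i) * Polynomial.X)
      + ∑ i, Polynomial.C (-q * ∏ j ∈ Finset.univ.erase i, ((x i - x j - q) / (x i - x j)))
          * (Polynomial.X * ∏ j ∈ Finset.univ.erase i,
              (1 - Polynomial.C (x j) * Polynomial.X)) := by
  have h := congrArg (Polynomial.reflect N) (qPP_lagrange N x hx q)
  have hcard : (Finset.univ : Finset (Fin N)).card = N := by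
    rw [Finset.card_univ, Fintype.card_fin]
  have hrw1 : ∀ y : Fin N → ℝ,
      Polynomial.reflect N (∏ i, (Polynomial.X - Polynomial.C (y i)))
        = ∏ i, (1 - Polynomial.C (y i) * Polynomial.X) := by
    intro y
    have h2 := qPP_reflect_prod (Finset.univ : Finset (Fin N)) y
    rwa [hcard] at h2
  rw [hrw1 (fun i => x i + q), Polynomial.reflect_add, hrw1 x, qPP_reflect_sum] at h
  rw [h]
  congr 1
  refine Finset.sum_congr rfl fun i _ => ?_
  rw [Polynomial.reflect_C_mul]
  congr 1
  have hc : (Finset.univ.erase i).card + 1 = N := by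
    rw [Finset.card_erase_of_mem (Finset.mem_univ i), hcard]
    have : 0 < N := Fin.pos i
    omega
  have h3 := qPP_reflect_shift (Finset.univ.erase i) x
  rwa [hc] at h3

noncomputable def qPPF {N : ℕ} (x : Fin N → ℝ) (q : ℝ) (i : Fin N) : ℝ :=
  ∏ j ∈ Finset.univ.erase i, ((x i - x j - q) / (x i - x j))

noncomputable def qPPG (N : ℕ) (x : Fin N → ℝ) (q : ℝ) : PowerSeries ℝ :=
  (∏ i, (1 - PowerSeries.C (R := ℝ) (x i + q) * PowerSeries.X)) * ∏ i, qPPgeo (x i)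

theorem qPP_A_mul_geo {N : ℕ} (x : Fin N → ℝ) (i : Fin N) :
    (∏ j, (1 - PowerSeries.C (R := ℝ) (x j) * PowerSeries.X)) * qPPgeo (x i)
      = ∏ j ∈ Finset.univ.erase i, (1 - PowerSeries.C (R := ℝ) (x j) * PowerSeries.X) := by
  rw [← Finset.mul_prod_erase _ _ (Finset.mem_univ i)]
  calc (1 - PowerSeries.C (R := ℝ) (x i) * PowerSeries.X)
        * (∏ j ∈ Finset.univ.erase i, (1 - PowerSeries.C (R := ℝ) (x j) * PowerSeries.X))
        * qPPgeo (x i)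
      = ((1 - PowerSeries.C (R := ℝ) (x i) * PowerSeries.X) * qPPgeo (x i))
        * ∏ j ∈ Finset.univ.erase i, (1 - PowerSeries.C (R := ℝ) (x j) * PowerSeries.X) := by ring
    _ = _ := by rw [qPPgeo_inv, one_mul]

theorem qPP_A_inv {N : ℕ} (x : Fin N → ℝ) :
    (∏ j, (1 - PowerSeries.C (R := ℝ) (x j) * PowerSeries.X)) * (∏ j, qPPgeo (x j)) = 1 := by
  rw [← Finset.prod_mul_distrib]
  exact Finset.prod_eq_one fun i _ => qPPgeo_inv (x i)

theorem qPPG_closed (N : ℕ) (x : Fin N → ℝ) (hx : Function.Injective x) (q : ℝ) :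
    qPPG N x q = 1 - PowerSeries.C (R := ℝ) q *
      (PowerSeries.X * ∑ i, PowerSeries.C (R := ℝ) (qPPF x q i) * qPPgeo (x i)) := by
  classical
  set A := ∏ j, (1 - PowerSeries.C (R := ℝ) (x j) * PowerSeries.X) with hAdef
  set R := (1 : PowerSeries ℝ) - PowerSeries.C (R := ℝ) q *
      (PowerSeries.X * ∑ i, PowerSeries.C (R := ℝ) (qPPF x q i) * qPPgeo (x i)) with hRdef
  have hcast : ∏ i, (1 - PowerSeries.C (R := ℝ) (x i + q) * PowerSeries.X) =
      A + ∑ i, PowerSeries.C (R := ℝ) (-q * qPPF x q i) *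
        (PowerSeries.X * ∏ j ∈ Finset.univ.erase i,
          (1 - PowerSeries.C (R := ℝ) (x j) * PowerSeries.X)) := by
    have h := congrArg (Polynomial.coeToPowerSeries.ringHom (R := ℝ)) (qPP_poly_id N x hx q)
    simpa only [map_prod, map_sum, map_add, map_mul, map_sub, map_one,
      Polynomial.coeToPowerSeries.ringHom_apply, Polynomial.coe_C, Polynomial.coe_X,
      qPPF] using h
  have hAR : A * R = ∏ i, (1 - PowerSeries.C (R := ℝ) (x i + q) * PowerSeries.X) := by
    rw [hcast]
    have h1 : A * R = A - PowerSeries.C (R := ℝ) q *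
        (PowerSeries.X * ∑ i, PowerSeries.C (R := ℝ) (qPPF x q i) * (A * qPPgeo (x i))) := by
      rw [hRdef, mul_sub, mul_one]
      congr 1
      have h2 : A * ∑ i, PowerSeries.C (R := ℝ) (qPPF x q i) * qPPgeo (x i)
          = ∑ i, PowerSeries.C (R := ℝ) (qPPF x q i) * (A * qPPgeo (x i)) := by
        rw [Finset.mul_sum]
        exact Finset.sum_congr rfl fun i _ => by ring
      calc A * (PowerSeries.C (R := ℝ) q * (PowerSeries.X *
              ∑ i, PowerSeries.C (R := ℝ) (qPPF x q i) * qPPgeo (x i)))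
            = PowerSeries.C (R := ℝ) q * (PowerSeries.X *
              (A * ∑ i, PowerSeries.C (R := ℝ) (qPPF x q i) * qPPgeo (x i))) := by ring
        _ = PowerSeries.C (R := ℝ) q * (PowerSeries.X *
              ∑ i, PowerSeries.C (R := ℝ) (qPPF x q i) * (A * qPPgeo (x i))) := by rw [h2]
    rw [h1]
    have h3 : ∀ i : Fin N, A * qPPgeo (x i)
        = ∏ j ∈ Finset.univ.erase i, (1 - PowerSeries.C (R := ℝ) (x j) * PowerSeries.X) :=
      fun i => qPP_A_mul_geo x i
    simp only [h3]
    rw [sub_eq_add_neg]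
    congr 1
    simp only [Finset.mul_sum, ← Finset.sum_neg_distrib]
    exact Finset.sum_congr rfl fun i _ => by rw [map_mul, map_neg]; ring
  rw [qPPG, ← hAR]
  calc A * R * ∏ j, qPPgeo (x j) = R * (A * ∏ j, qPPgeo (x j)) := by ring
    _ = R := by rw [hAdef, qPP_A_inv x, mul_one]

theorem qPPG_coeff_zero (N : ℕ) (x : Fin N → ℝ) (hx : Function.Injective x) (q : ℝ) :
    PowerSeries.coeff (R := ℝ) 0 (qPPG N x q) = 1 := by
  rw [qPPG_closed N x hx q, map_sub]
  have h1 : PowerSeries.coeff (R := ℝ) 0 (1 : PowerSeries ℝ) = 1 := by simp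
  have h2 : PowerSeries.coeff (R := ℝ) 0 (PowerSeries.C (R := ℝ) q *
      (PowerSeries.X * ∑ i, PowerSeries.C (R := ℝ) (qPPF x q i) * qPPgeo (x i))) = 0 := by
    rw [PowerSeries.coeff_C_mul]
    simp [PowerSeries.coeff_zero_eq_constantCoeff]
  rw [h1, h2, sub_zero]

theorem qPPG_coeff_succ (N : ℕ) (x : Fin N → ℝ) (hx : Function.Injective x) (q : ℝ) (n : ℕ) :
    PowerSeries.coeff (R := ℝ) (n + 1) (qPPG N x q) = -(q * ∑ i, qPPF x q i * x i ^ n) := by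
  rw [qPPG_closed N x hx q, map_sub, PowerSeries.coeff_C_mul, PowerSeries.coeff_succ_X_mul,
    map_sum]
  have h1 : PowerSeries.coeff (R := ℝ) (n + 1) (1 : PowerSeries ℝ) = 0 := by
    simp [PowerSeries.coeff_one]
  rw [h1, zero_sub]
  congr 1
  congr 1
  refine Finset.sum_congr rfl fun i _ => ?_
  rw [PowerSeries.coeff_C_mul, qPPgeo, PowerSeries.coeff_mk]

theorem qPP_deriv_prod_inv {ι : Type*} (s : Finset ι) (u v : ι → PowerSeries ℝ)
    (h : ∀ i ∈ s, u i * v i = 1) :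
    (PowerSeries.derivative ℝ) (∏ i ∈ s, u i)
      = (∑ i ∈ s, (PowerSeries.derivative ℝ) (u i) * v i) * ∏ i ∈ s, u i := by
  classical
  induction s using Finset.induction_on with
  | empty => simp
  | @insert b s hb ih =>
    rw [Finset.prod_insert hb, Finset.sum_insert hb,
      Derivation.leibniz, ih (fun i hi => h i (Finset.mem_insert_of_mem hi))]
    have hb1 : u b * v b = 1 := h b (Finset.mem_insert_self _ _)
    simp only [smul_eq_mul]
    linear_combination (-((PowerSeries.derivative ℝ) (u b) * ∏ i ∈ s, u i)) * hb1

theorem qPP_deriv_geo (a : ℝ) :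
    (PowerSeries.derivative ℝ) (qPPgeo a) = PowerSeries.C (R := ℝ) a * (qPPgeo a * qPPgeo a) := by
  ext n
  rw [PowerSeries.coeff_derivative, PowerSeries.coeff_C_mul, PowerSeries.coeff_mul]
  have h1 : ∀ p ∈ Finset.HasAntidiagonal.antidiagonal n,
      PowerSeries.coeff (R := ℝ) p.1 (qPPgeo a) * PowerSeries.coeff (R := ℝ) p.2 (qPPgeo a) = a ^ n := by
    intro p hp
    rw [qPPgeo, PowerSeries.coeff_mk, PowerSeries.coeff_mk, ← pow_add,
      Finset.HasAntidiagonal.mem_antidiagonal.mp hp]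
  rw [Finset.sum_congr rfl h1, Finset.sum_const, Finset.Nat.card_antidiagonal]
  rw [qPPgeo, PowerSeries.coeff_mk]
  simp only [nsmul_eq_mul]
  push_cast
  ring

theorem qPP_deriv_lin (a : ℝ) :
    (PowerSeries.derivative ℝ) (1 - PowerSeries.C (R := ℝ) a * PowerSeries.X)
      = -(PowerSeries.C (R := ℝ) a) := by
  rw [map_sub, Derivation.leibniz]
  simp [smul_eq_mul]

theorem qPPG_deriv (N : ℕ) (x : Fin N → ℝ) (q : ℝ) :
    (PowerSeries.derivative ℝ) (qPPG N x q)
      = (∑ i, (PowerSeries.C (R := ℝ) (x i) * qPPgeo (x i)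
          - PowerSeries.C (R := ℝ) (x i + q) * qPPgeo (x i + q))) * qPPG N x q := by
  have hprod : qPPG N x q = ∏ i, ((1 - PowerSeries.C (R := ℝ) (x i + q) * PowerSeries.X) * qPPgeo (x i)) := by
    rw [qPPG, ← Finset.prod_mul_distrib]
  rw [hprod, qPP_deriv_prod_inv _ _
      (fun i => (1 - PowerSeries.C (R := ℝ) (x i) * PowerSeries.X) * qPPgeo (x i + q)) ?_]
  · congr 1
    refine Finset.sum_congr rfl fun i _ => ?_
    rw [Derivation.leibniz, qPP_deriv_geo, qPP_deriv_lin]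
    simp only [smul_eq_mul]
    have g1 : (1 - PowerSeries.C (R := ℝ) (x i) * PowerSeries.X) * qPPgeo (x i) = 1 := qPPgeo_inv _
    have g2 : (1 - PowerSeries.C (R := ℝ) (x i + q) * PowerSeries.X) * qPPgeo (x i + q) = 1 :=
      qPPgeo_inv _
    linear_combination (PowerSeries.C (R := ℝ) (x i) * qPPgeo (x i) *
        ((1 - PowerSeries.C (R := ℝ) (x i + q) * PowerSeries.X) * qPPgeo (x i + q))
        - PowerSeries.C (R := ℝ) (x i + q) * qPPgeo (x i + q)) * g1
      + (PowerSeries.C (R := ℝ) (x i) * qPPgeo (x i)) * g2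
  · intro i _
    calc (1 - PowerSeries.C (R := ℝ) (x i + q) * PowerSeries.X) * qPPgeo (x i)
        * ((1 - PowerSeries.C (R := ℝ) (x i) * PowerSeries.X) * qPPgeo (x i + q))
        = ((1 - PowerSeries.C (R := ℝ) (x i + q) * PowerSeries.X) * qPPgeo (x i + q))
          * ((1 - PowerSeries.C (R := ℝ) (x i) * PowerSeries.X) * qPPgeo (x i)) := by ring
      _ = 1 := by rw [qPPgeo_inv, qPPgeo_inv, one_mul]

theorem qPPG_rec (N : ℕ) (x : Fin N → ℝ) (q : ℝ) (n : ℕ) :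
    PowerSeries.coeff (R := ℝ) (n + 1) (qPPG N x q) * (n + 1)
      = ∑ j ∈ Finset.range (n + 1),
          (∑ i, (x i ^ (j + 1) - (x i + q) ^ (j + 1)))
            * PowerSeries.coeff (R := ℝ) (n - j) (qPPG N x q) := by
  have h := congrArg (PowerSeries.coeff (R := ℝ) n) (qPPG_deriv N x q)
  rw [PowerSeries.coeff_derivative, PowerSeries.coeff_mul] at h
  rw [h, Finset.Nat.sum_antidiagonal_eq_sum_range_succ_mk]
  refine Finset.sum_congr rfl fun j _ => ?_
  congr 1
  rw [map_sum]
  refine Finset.sum_congr rfl fun i _ => ?_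
  rw [map_sub, PowerSeries.coeff_C_mul, PowerSeries.coeff_C_mul, qPPgeo, qPPgeo,
    PowerSeries.coeff_mk, PowerSeries.coeff_mk, ← pow_succ', ← pow_succ']

theorem qPP_Fc_eq (N : ℕ) (x : Fin N → ℝ) (hx : Function.Injective x) (q : ℝ) :
    ∀ n, qPPFc (fun m => -(((m - 1).factorial : ℝ) *
        ((∑ i, (x i + q) ^ m) - ∑ i, x i ^ m))) n
      = (n.factorial : ℝ) * PowerSeries.coeff (R := ℝ) n (qPPG N x q) := by
  intro n
  induction n using Nat.strong_induction_on with
  | _ n ih =>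
    match n with
    | 0 => simp [qPPFc, qPPG_coeff_zero N x hx q]
    | (n + 1) =>
      rw [qPPFc]
      have hstep : ∀ j ∈ Finset.range (n + 1),
          (n.choose j : ℝ) * (-(((j + 1 - 1).factorial : ℝ) *
            ((∑ i, (x i + q) ^ (j + 1)) - ∑ i, x i ^ (j + 1))))
            * qPPFc (fun m => -(((m - 1).factorial : ℝ) *
                ((∑ i, (x i + q) ^ m) - ∑ i, x i ^ m))) (n - j)
          = (n.factorial : ℝ) * ((∑ i, (x i ^ (j + 1) - (x i + q) ^ (j + 1)))
              * PowerSeries.coeff (R := ℝ) (n - j) (qPPG N x q)) := by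
        intro j hj
        have hjn : j ≤ n := Nat.lt_succ_iff.mp (Finset.mem_range.mp hj)
        rw [ih (n - j) (by omega)]
        have hc : (n.choose j : ℝ) * (j.factorial : ℝ) * ((n - j).factorial : ℝ)
            = (n.factorial : ℝ) := by
          exact_mod_cast congrArg (Nat.cast (R := ℝ))
            (Nat.choose_mul_factorial_mul_factorial hjn)
        have hS : (∑ i, (x i ^ (j + 1) - (x i + q) ^ (j + 1)))
            = -((∑ i, (x i + q) ^ (j + 1)) - ∑ i, x i ^ (j + 1)) := by
          rw [Finset.sum_sub_distrib]
          ring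
        rw [hS]
        have hj1 : j + 1 - 1 = j := by omega
        rw [hj1]
        linear_combination (-(((∑ i, (x i + q) ^ (j + 1)) - ∑ i, x i ^ (j + 1))
          * PowerSeries.coeff (R := ℝ) (n - j) (qPPG N x q))) * hc
      rw [Finset.sum_congr rfl hstep, ← Finset.mul_sum, ← qPPG_rec N x q n]
      rw [Nat.factorial_succ]
      push_cast
      ring

open scoped Classical in
/-- Set-partition expansion:
`(k+1)! m_k^{(q)}(x) = (1/q) Σ_{π ∈ P(k+1)} (-1)^{|π|-1} ∏_{V ∈ π} (|V|-1)!
  (p_{|V|}(x+q) - p_{|V|}(x))`,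
where `P(k+1)` is the set of set partitions of `{1,…,k+1}`. -/
theorem qPP_partition_expansion (N : ℕ) (x : Fin N → ℝ) (hx : Function.Injective x)
    (q : ℝ) (hq : q ≠ 0) (k : ℕ) :
    ((k + 1).factorial : ℝ) *
      ∑ i, (∏ j ∈ Finset.univ.erase i, (x i - x j - q) / (x i - x j)) * x i ^ k =
    (1 / q) *
      ∑ P ∈ (Finset.univ : Finset (Fin (k + 1))).powerset.powerset.filter
          (fun P => (∅ ∉ P) ∧ ∀ a : Fin (k + 1), ∃! V, V ∈ P ∧ a ∈ V),
        (-1 : ℝ) ^ (P.card - 1) *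
          ∏ V ∈ P, ((V.card - 1).factorial : ℝ) *
            ((∑ i, (x i + q) ^ V.card) - ∑ i, x i ^ V.card) := by
  classical
  set f : ℕ → ℝ := fun m => -(((m - 1).factorial : ℝ) *
      ((∑ i, (x i + q) ^ m) - ∑ i, x i ^ m)) with hf
  have hsets : (Finset.univ : Finset (Fin (k + 1))).powerset.powerset.filter
      (fun P => (∅ ∉ P) ∧ ∀ a : Fin (k + 1), ∃! V, V ∈ P ∧ a ∈ V)
      = qPPpartitions (Finset.univ : Finset (Fin (k + 1))) := by
    unfold qPPpartitions
    ext P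
    simp only [Finset.mem_filter, Finset.mem_univ, true_implies]
  have hterm : ∀ P ∈ qPPpartitions (Finset.univ : Finset (Fin (k + 1))),
      (-1 : ℝ) ^ (P.card - 1) *
          ∏ V ∈ P, ((V.card - 1).factorial : ℝ) *
            ((∑ i, (x i + q) ^ V.card) - ∑ i, x i ^ V.card)
        = -(∏ V ∈ P, f V.card) := by
    intro P hP
    have hPne : P.Nonempty := by
      obtain ⟨V, ⟨hV, -⟩, -⟩ := (qPP_mem_partitions.mp hP).2.2 ⟨0, Nat.succ_pos k⟩
        (Finset.mem_univ _)
      exact ⟨V, hV⟩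
    have hcard : 1 ≤ P.card := Finset.card_pos.mpr hPne
    have hprod : ∏ V ∈ P, f V.card
        = (-1 : ℝ) ^ P.card * ∏ V ∈ P, (((V.card - 1).factorial : ℝ) *
            ((∑ i, (x i + q) ^ V.card) - ∑ i, x i ^ V.card)) := by
      have hfV : ∀ V ∈ P, f V.card = (-1) * (((V.card - 1).factorial : ℝ) *
          ((∑ i, (x i + q) ^ V.card) - ∑ i, x i ^ V.card)) := fun V _ => by rw [hf]; ring
      rw [Finset.prod_congr rfl hfV, Finset.prod_mul_distrib, Finset.prod_const]
    have hP1 : P.card = (P.card - 1) + 1 := by omega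
    have hpow : (-1 : ℝ) ^ P.card = (-1) ^ (P.card - 1) * (-1) := by
      conv_lhs => rw [hP1]
      rw [pow_succ]
    rw [hprod, hpow]
    ring
  rw [hsets, Finset.sum_congr rfl hterm, Finset.sum_neg_distrib]
  have h1 : ∑ P ∈ qPPpartitions (Finset.univ : Finset (Fin (k + 1))), ∏ V ∈ P, f V.card
      = qPPpartSum f (Finset.univ : Finset (Fin (k + 1))) := rfl
  rw [h1, qPPpartSum_eq_Fc f (k + 1) Finset.univ (by simp), hf, qPP_Fc_eq N x hx q (k + 1),
    qPPG_coeff_succ N x hx q k]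
  have hm : ∑ i, qPPF x q i * x i ^ k
      = ∑ i, (∏ j ∈ Finset.univ.erase i, (x i - x j - q) / (x i - x j)) * x i ^ k := rfl
  rw [hm]
  field_simp
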